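/- For all ζ > 0, the function g(ζ) = ζ·exp(-ζ²/2) / ∫₀^ζ exp(-t²/2) dt is strictly decreasing, i.e., g'(ζ) < 0 for all ζ > 0. -/

import Mathlib

open Real Set

noncomputable def g (ζ : ℝ) : ℝ :=
  (ζ * Real.exp (-ζ^2/2)) / (∫ t in (0:ℝ)..ζ, Real.exp (-t^2/2))

noncomputable def Dfun (ζ : ℝ) : ℝ := ∫ t in (0:ℝ)..ζ, Real.exp (-t^2/2)

lemma cont_f : Continuous fun t : ℝ => Real.exp (-t^2/2) := by
  exact Real.continuous_exp.comp (by continuity)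

lemma hasDerivD (ζ : ℝ) : HasDerivAt Dfun (Real.exp (-ζ^2/2)) ζ :=
  (cont_f.integral_hasStrictDerivAt 0 ζ).hasDerivAt

lemma Dpos {ζ : ℝ} (hζ : 0 < ζ) : 0 < Dfun ζ := by
  apply intervalIntegral.intervalIntegral_pos_of_pos
    (cont_f.intervalIntegrable 0 ζ) (fun x => Real.exp_pos _) hζ

lemma hasDerivN (ζ : ℝ) :
    HasDerivAt (fun x : ℝ => x * Real.exp (-x^2/2))
      (Real.exp (-ζ^2/2) * (1 - ζ^2)) ζ := by
  have h1 : HasDerivAt (fun x : ℝ => -x^2/2) (-ζ) ζ := by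
    have := ((hasDerivAt_pow 2 ζ).neg).div_const 2
    refine this.congr_deriv ?_; push_cast; ring
  have h2 : HasDerivAt (fun x : ℝ => Real.exp (-x^2/2))
      (Real.exp (-ζ^2/2) * (-ζ)) ζ := h1.exp
  have := (hasDerivAt_id ζ).mul h2
  simp only [id] at this
  refine this.congr_deriv ?_; ring

noncomputable def hfun (ζ : ℝ) : ℝ :=
  ζ * Real.exp (-ζ^2/2) - (1 - ζ^2) * Dfun ζ

lemma hasDerivH (ζ : ℝ) : HasDerivAt hfun (2 * ζ * Dfun ζ) ζ := by
  have h1 : HasDerivAt (fun x : ℝ => 1 - x^2) (-(2*ζ)) ζ := by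
    have := (hasDerivAt_pow 2 ζ).const_sub 1
    refine this.congr_deriv ?_; push_cast; ring
  have := (hasDerivN ζ).sub ((h1.mul (hasDerivD ζ)))
  refine this.congr_deriv ?_; ring

lemma hpos {ζ : ℝ} (hζ : 0 < ζ) : 0 < hfun ζ := by
  have hcont : ContinuousOn hfun (Ici 0) :=
    fun x _ => ((hasDerivH x).continuousAt).continuousWithinAt
  have hmono : StrictMonoOn hfun (Ici 0) := by
    apply strictMonoOn_of_deriv_pos (convex_Ici 0) hcont
    intro x hx
    rw [interior_Ici] at hx
    rw [(hasDerivH x).deriv]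
    have hx' : 0 < x := hx
    exact mul_pos (by linarith) (Dpos hx')
  have h0 : hfun 0 = 0 := by
    simp [hfun, Dfun]
  have := hmono (self_mem_Ici) (le_of_lt hζ : (0:ℝ) ≤ ζ) hζ
  rwa [h0] at this

lemma hasDerivG {ζ : ℝ} (hζ : 0 < ζ) :
    HasDerivAt g (-(Real.exp (-ζ^2/2) * hfun ζ) / (Dfun ζ)^2) ζ := by
  have := (hasDerivN ζ).div (hasDerivD ζ) (ne_of_gt (Dpos hζ))
  refine this.congr_deriv ?_
  unfold hfun
  ring

lemma derivG_neg {ζ : ℝ} (hζ : 0 < ζ) : deriv g ζ < 0 := by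
  rw [(hasDerivG hζ).deriv]
  apply div_neg_of_neg_of_pos
  · have := hpos hζ
    have := Real.exp_pos (-ζ^2/2)
    nlinarith
  · exact pow_pos (Dpos hζ) 2

theorem g_strictAnti :
    StrictAntiOn g (Set.Ioi (0:ℝ)) ∧ ∀ ζ : ℝ, 0 < ζ → deriv g ζ < 0 := by
  constructor
  · apply strictAntiOn_of_deriv_neg (convex_Ioi 0)
    · exact fun x hx => ((hasDerivG hx).continuousAt).continuousWithinAt
    · intro x hx
      rw [interior_Ioi] at hx
      exact derivG_neg hx
  · exact fun ζ hζ => derivG_neg hζ
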